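/- arXiv:2601.02769 — 2 statements merged into one kernel-verified Lean document; each statement's English description precedes it below -/
import Mathlib

section
/- (Order-statistic concentration, upper deviation.) Let n ≥ 1, let S_1, …, S_n be i.i.d. real-valued random variables, let t ∈ ℝ, set p = P[S_1 ≤ t], let c > 0, and let m ∈ {1, …, n} satisfy m ≤ np − c√(n log n). Let S_{(m)} denote the m-th smallest value among S_1, …, S_n. Then P[S_{(m)} > t] ≤ n^{−2c²}. -/
open MeasureTheory ProbabilityTheory

/-- The `r`-th smallest value (1-indexed `r`-th order statistic) of a list:
the `r`-th entry of the list sorted in nondecreasing order. -/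
noncomputable def orderStat {α : Type*} [LinearOrder α] [Inhabited α]
    (r : ℕ) (l : List α) : α :=
  (l.insertionSort (· ≤ ·)).getD (r - 1) default

open Real in
lemma bern_log_mgf_le {p : ℝ} (hp0 : 0 ≤ p) (hp1 : p ≤ 1) {x : ℝ} (hx : x ≤ 0) :
    Real.log (1 - p + p * Real.exp x) ≤ p * x + x ^ 2 / 8 := by
  set D : ℝ → ℝ := fun y => 1 - p + p * Real.exp y with hDdef
  have hD : ∀ y, 0 < D y := by
    intro y
    rcases eq_or_lt_of_le hp0 with h | h
    · simp [hDdef, ← h]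
    · have := Real.exp_pos y
      simp only [hDdef]
      nlinarith
  set φ : ℝ → ℝ := fun y => p * y + y ^ 2 / 8 - Real.log (D y) with hφdef
  set ψ : ℝ → ℝ := fun y => p + y / 4 - p * Real.exp y / D y with hψdef
  have hDdiff : ∀ y, HasDerivAt D (p * Real.exp y) y := fun y =>
    ((Real.hasDerivAt_exp y).const_mul p).const_add (1 - p)
  have hφdiff : ∀ y, HasDerivAt φ (ψ y) y := by
    intro y
    have h1 : HasDerivAt (fun y : ℝ => p * y) p y := by
      simpa using (hasDerivAt_id y).const_mul p
    have h2 : HasDerivAt (fun y : ℝ => y ^ 2 / 8) (y / 4) y := by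
      have := (hasDerivAt_pow 2 y).div_const 8
      refine this.congr_deriv ?_
      norm_num
      ring
    have h3 : HasDerivAt (fun y => Real.log (D y)) (p * Real.exp y / D y) y :=
      (hDdiff y).log (hD y).ne'
    exact (h1.add h2).sub h3
  have hψdiff : ∀ y, HasDerivAt ψ
      (1 / 4 - (p * Real.exp y * D y - p * Real.exp y * (p * Real.exp y)) / (D y) ^ 2) y := by
    intro y
    have hq : HasDerivAt (fun y => p * Real.exp y / D y)
        ((p * Real.exp y * D y - p * Real.exp y * (p * Real.exp y)) / (D y) ^ 2) y :=
      ((Real.hasDerivAt_exp y).const_mul p).div (hDdiff y) (hD y).ne'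
    have h2 : HasDerivAt (fun y : ℝ => p + y / 4) (1 / 4) y := by
      simpa using ((hasDerivAt_id y).div_const 4).const_add p
    exact h2.sub hq
  have hψmono : Monotone ψ := by
    apply monotone_of_deriv_nonneg
    · exact fun y => (hψdiff y).differentiableAt
    · intro y
      rw [(hψdiff y).deriv]
      have ha : 0 ≤ p * Real.exp y := mul_nonneg hp0 (Real.exp_pos y).le
      have hDy := hD y
      rw [sub_nonneg, div_le_iff₀ (by positivity)]
      have h1 : (D y) = 1 - p + p * Real.exp y := rfl
      nlinarith [sq_nonneg (1 - p - p * Real.exp y)]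
  have hψ0 : ψ 0 = 0 := by
    simp [hψdef, hDdef, Real.exp_zero]
  have hψle : ∀ y ≤ 0, ψ y ≤ 0 := fun y hy => by
    simpa [hψ0] using hψmono hy
  have hφanti : AntitoneOn φ (Set.Iic 0) := by
    apply antitoneOn_of_deriv_nonpos (convex_Iic 0)
    · exact Continuous.continuousOn (by
        have : Differentiable ℝ φ := fun y => (hφdiff y).differentiableAt
        exact this.continuous)
    · exact fun y _ => ((hφdiff y).differentiableAt).differentiableWithinAt
    · intro y hy
      rw [interior_Iic] at hy
      rw [(hφdiff y).deriv]
      exact hψle y hy.le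
  have hφ0 : φ 0 = 0 := by simp [hφdef, hDdef, Real.exp_zero]
  have := hφanti (Set.mem_Iic.2 hx) (Set.mem_Iic.2 le_rfl) hx
  rw [hφ0] at this
  have : 0 ≤ φ x := this
  simp only [hφdef] at this
  linarith


lemma sorted_countP_le {t : ℝ} : ∀ {l : List ℝ}, l.Pairwise (· ≤ ·) →
    ∀ {j : ℕ} (hj : j < l.length), t < l.get ⟨j, hj⟩ →
    l.countP (fun x => decide (x ≤ t)) ≤ j := by
  intro l
  induction l with
  | nil => intro _ j hj; simp at hj
  | cons a l ih =>
    intro hs j hj hlt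
    rw [List.pairwise_cons] at hs
    cases j with
    | zero =>
      simp only [List.get] at hlt
      have : ∀ x ∈ a :: l, ¬ (x ≤ t) := by
        intro x hx
        rcases List.mem_cons.1 hx with rfl | hx
        · exact not_le.2 hlt
        · exact not_le.2 (lt_of_lt_of_le hlt (hs.1 x hx))
      rw [List.countP_eq_zero.2 (by simpa using this)]
    | succ j =>
      simp only [List.length_cons, Nat.succ_lt_succ_iff] at hj
      have hlt' : t < l.get ⟨j, hj⟩ := hlt
      have := ih hs.2 hj hlt'
      rw [List.countP_cons]
      split <;> omega

lemma countP_ofFn {n : ℕ} (f : Fin n → ℝ) (q : ℝ → Bool) :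
    (List.ofFn f).countP q = ∑ i : Fin n, (if q (f i) then 1 else 0) := by
  induction n with
  | zero => simp
  | succ n ih =>
    rw [List.ofFn_succ, List.countP_cons, Fin.sum_univ_succ, ih (fun i => f i.succ)]
    by_cases h : q (f 0) <;> simp [h, add_comm]


lemma mgf_indicator {Ω : Type*} [MeasurableSpace Ω] (P : Measure Ω) [IsProbabilityMeasure P]
    {A : Set Ω} (hA : MeasurableSet A) (x : ℝ) :
    mgf (A.indicator fun _ => (1 : ℝ)) P x
      = 1 - (P A).toReal + (P A).toReal * Real.exp x := by
  have hfun : (fun ω => Real.exp (x * A.indicator (fun _ => (1 : ℝ)) ω))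
      = fun ω => A.indicator (fun _ => Real.exp x - 1) ω + 1 := by
    funext ω
    by_cases h : ω ∈ A <;>
      simp [h, Set.indicator_of_mem, Set.indicator_of_notMem]
  rw [mgf]
  simp only [hfun]
  rw [integral_add ((integrable_const _).indicator hA) (integrable_const 1),
    integral_indicator_const _ hA, integral_const]
  simp [smul_eq_mul, Measure.real]
  ring


/-- (Order-statistic concentration, upper deviation.) Let `n ≥ 1`, let `S_1, …, S_n` be
i.i.d. real-valued random variables, `t ∈ ℝ`, `p = P[S_1 ≤ t]`, `c > 0`, and let
`m ∈ {1,…,n}` satisfy `m ≤ np - c√(n log n)`. Let `S_(m)` be the `m`-th smallest value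
among `S_1, …, S_n`. Then `P[S_(m) > t] ≤ n^{-2c²}`. -/
theorem order_statistic_upper_deviation
    {Ω : Type*} [MeasurableSpace Ω] (P : Measure Ω) [IsProbabilityMeasure P]
    (n : ℕ) (hn : 1 ≤ n)
    (S : Fin n → Ω → ℝ)
    (hSmeas : ∀ i, Measurable (S i))
    (hSindep : iIndepFun S P)
    (hSident : ∀ i j, P.map (S i) = P.map (S j))
    (t : ℝ)
    (p : ℝ) (hp : p = (P {ω | S ⟨0, hn⟩ ω ≤ t}).toReal)
    (c : ℝ) (hc : 0 < c)
    (m : ℕ) (hm1 : 1 ≤ m) (hmn : m ≤ n)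
    (hm : (m : ℝ) ≤ n * p - c * Real.sqrt (n * Real.log n))
    (Sm : Ω → ℝ)
    (hSm : ∀ ω, Sm ω = orderStat m (List.ofFn fun i : Fin n => S i ω)) :
    P {ω | t < Sm ω} ≤ ENNReal.ofReal ((n : ℝ) ^ (-(2 * c ^ 2))) := by
  -- indicator variables
  have hA : ∀ i : Fin n, MeasurableSet {ω | S i ω ≤ t} := fun i =>
    hSmeas i measurableSet_Iic
  have hPA : ∀ i : Fin n, P {ω | S i ω ≤ t} = P {ω | S ⟨0, hn⟩ ω ≤ t} := by
    intro i
    have h1 : P.map (S i) (Set.Iic t) = P.map (S ⟨0, hn⟩) (Set.Iic t) := by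
      rw [hSident i ⟨0, hn⟩]
    rwa [Measure.map_apply (hSmeas i) measurableSet_Iic,
      Measure.map_apply (hSmeas _) measurableSet_Iic] at h1
  have hPAi : ∀ i : Fin n, (P {ω | S i ω ≤ t}).toReal = p := fun i => by
    rw [hPA i, hp]
  have hp0 : 0 ≤ p := hp ▸ ENNReal.toReal_nonneg
  have hp1 : p ≤ 1 := by
    rw [hp]
    exact ENNReal.toReal_le_of_le_ofReal one_pos.le (by simpa using prob_le_one)
  set g : ℝ → ℝ := fun x => if x ≤ t then 1 else 0 with hg
  have hgmeas : Measurable g :=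
    Measurable.ite measurableSet_Iic measurable_const measurable_const
  set Y : Fin n → Ω → ℝ := fun i => g ∘ S i with hY
  have hYmeas : ∀ i, Measurable (Y i) := fun i => hgmeas.comp (hSmeas i)
  have hYindep : iIndepFun Y P :=
    hSindep.comp (fun _ => g) (fun _ => hgmeas)
  have hYind : ∀ i, Y i = ({ω | S i ω ≤ t}).indicator (fun _ => (1 : ℝ)) := by
    intro i; funext ω
    by_cases h : S i ω ≤ t <;>
      simp [hY, hg, Set.indicator_apply, Set.mem_setOf_eq, h]
  have hYnn : ∀ i ω, 0 ≤ Y i ω := by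
    intro i ω
    simp only [hY, hg, Function.comp_apply]
    split <;> norm_num
  -- parameters
  have hn0 : (0 : ℝ) < n := by exact_mod_cast hn
  have hlogn : 0 ≤ Real.log n := Real.log_nonneg (by exact_mod_cast hn)
  have hnlog : 0 ≤ (n : ℝ) * Real.log n := mul_nonneg hn0.le hlogn
  set s' : ℝ := c * Real.sqrt ((n : ℝ) * Real.log n) with hs'
  have hs'0 : 0 ≤ s' := mul_nonneg hc.le (Real.sqrt_nonneg _)
  set ε : ℝ := n * p - s' with hε
  set lam : ℝ := 4 * s' / n with hlam
  have hlam0 : 0 ≤ lam := by positivity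
  have hxle : -lam ≤ 0 := neg_nonpos.2 hlam0
  -- integrability
  have hsum_meas : Measurable (∑ i : Fin n, Y i) := by
    have h : (∑ i : Fin n, Y i) = fun a => ∑ i : Fin n, Y i a := by
      funext a; simp [Finset.sum_apply]
    rw [h]; exact Finset.measurable_sum _ fun i _ => hYmeas i
  have h_int : Integrable (fun ω => Real.exp (-lam * (∑ i : Fin n, Y i) ω)) P := by
    apply Integrable.mono' (integrable_const (1 : ℝ))
    · exact ((hsum_meas.const_mul (-lam)).exp).aestronglyMeasurable
    · filter_upwards with ω
      rw [Real.norm_eq_abs, abs_of_pos (Real.exp_pos _), Real.exp_le_one_iff]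
      have h0 : 0 ≤ (∑ i : Fin n, Y i) ω := by
        rw [Finset.sum_apply]
        exact Finset.sum_nonneg fun i _ => hYnn i ω
      exact mul_nonpos_of_nonpos_of_nonneg hxle h0
  -- Chernoff
  have hch := measure_le_le_exp_mul_mgf (X := ∑ i : Fin n, Y i) (μ := P)
    (t := -lam) ε hxle h_int
  rw [hYindep.mgf_sum hYmeas] at hch
  have hmgfi : ∀ i : Fin n, mgf (Y i) P (-lam) = 1 - p + p * Real.exp (-lam) := by
    intro i
    rw [hYind i, mgf_indicator P (hA i), hPAi i]
  have hbase : 0 < 1 - p + p * Real.exp (-lam) := by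
    rcases eq_or_lt_of_le hp0 with h | h
    · simp [← h]
    · nlinarith [Real.exp_pos (-lam)]
  have hprod : ∏ i : Fin n, mgf (Y i) P (-lam) = (1 - p + p * Real.exp (-lam)) ^ n := by
    simp [hmgfi, Finset.prod_const, Finset.card_univ]
  have hle1 : (1 - p + p * Real.exp (-lam)) ^ n
      ≤ Real.exp ((n : ℝ) * (p * (-lam) + (-lam) ^ 2 / 8)) := by
    have h2 : 1 - p + p * Real.exp (-lam)
        ≤ Real.exp (p * (-lam) + (-lam) ^ 2 / 8) := by
      rw [← Real.exp_log hbase]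
      exact Real.exp_le_exp.2 (bern_log_mgf_le hp0 hp1 hxle)
    calc (1 - p + p * Real.exp (-lam)) ^ n
        ≤ (Real.exp (p * (-lam) + (-lam) ^ 2 / 8)) ^ n :=
          pow_le_pow_left₀ hbase.le h2 n
      _ = Real.exp ((n : ℝ) * (p * (-lam) + (-lam) ^ 2 / 8)) :=
          (Real.exp_nat_mul _ n).symm
  have hs'sq : s' ^ 2 = c ^ 2 * ((n : ℝ) * Real.log n) := by
    rw [hs', mul_pow, Real.sq_sqrt hnlog]
  have hexp_eq : Real.exp (-(-lam) * ε) * Real.exp ((n : ℝ) * (p * (-lam) + (-lam) ^ 2 / 8))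
      = Real.exp (-(2 * c ^ 2) * Real.log n) := by
    rw [← Real.exp_add]
    congr 1
    have : lam * ε - (n : ℝ) * p * lam + (n : ℝ) * lam ^ 2 / 8
        = -lam * s' + (n : ℝ) * lam ^ 2 / 8 := by
      rw [hε]; ring
    have hlam_eq : lam * (n : ℝ) = 4 * s' := by
      rw [hlam]; field_simp
    have hne : (n : ℝ) ≠ 0 := hn0.ne'
    have hratio : s' ^ 2 / (n : ℝ) = c ^ 2 * Real.log n := by
      rw [hs'sq]; field_simp
    have key : lam * ε - (n : ℝ) * p * lam + (n : ℝ) * lam ^ 2 / 8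
        = -(2 * c ^ 2) * Real.log n := by
      calc lam * ε - (n : ℝ) * p * lam + (n : ℝ) * lam ^ 2 / 8
          = -2 * (s' ^ 2 / (n : ℝ)) := by rw [hlam, hε]; field_simp; ring
        _ = -(2 * c ^ 2) * Real.log n := by rw [hratio]; ring
    calc -(-lam) * ε + (n : ℝ) * (p * (-lam) + (-lam) ^ 2 / 8)
        = lam * ε - (n : ℝ) * p * lam + (n : ℝ) * lam ^ 2 / 8 := by ring
      _ = -(2 * c ^ 2) * Real.log n := key
  -- real bound
  have hreal : (P {ω | (∑ i : Fin n, Y i) ω ≤ ε}).toReal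
      ≤ (n : ℝ) ^ (-(2 * c ^ 2)) := by
    rw [Real.rpow_def_of_pos hn0, mul_comm (Real.log n)]
    calc (P {ω | (∑ i : Fin n, Y i) ω ≤ ε}).toReal
        ≤ Real.exp (-(-lam) * ε) * ∏ i : Fin n, mgf (Y i) P (-lam) := hch
      _ ≤ Real.exp (-(-lam) * ε) * Real.exp ((n : ℝ) * (p * (-lam) + (-lam) ^ 2 / 8)) := by
          rw [hprod]
          exact mul_le_mul_of_nonneg_left hle1 (Real.exp_pos _).le
      _ = Real.exp (-(2 * c ^ 2) * Real.log n) := hexp_eq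
  -- event inclusion
  have hsub : {ω | t < Sm ω} ⊆ {ω | (∑ i : Fin n, Y i) ω ≤ ε} := by
    intro ω hω
    simp only [Set.mem_setOf_eq] at hω ⊢
    set l : List ℝ := List.ofFn (fun i : Fin n => S i ω) with hl
    have hmlt : m - 1 < (l.insertionSort (· ≤ ·)).length := by
      rw [List.length_insertionSort, hl, List.length_ofFn]
      omega
    have hget : Sm ω = (l.insertionSort (· ≤ ·)).get ⟨m - 1, hmlt⟩ := by
      rw [hSm ω, orderStat, ← hl, List.getD_eq_getElem _ _ hmlt]; rfl
    have hsorted : (l.insertionSort (· ≤ ·)).Pairwise (· ≤ ·) :=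
      List.pairwise_insertionSort _ _
    have hcount : (l.insertionSort (· ≤ ·)).countP (fun x => decide (x ≤ t)) ≤ m - 1 :=
      sorted_countP_le hsorted hmlt (hget ▸ hω)
    have hperm : l.countP (fun x => decide (x ≤ t)) ≤ m - 1 := by
      rwa [(List.perm_insertionSort (· ≤ ·) l).countP_eq] at hcount
    have hsum : (∑ i : Fin n, Y i) ω = (l.countP (fun x => decide (x ≤ t)) : ℝ) := by
      rw [Finset.sum_apply, hl, countP_ofFn]
      push_cast
      apply Finset.sum_congr rfl
      intro i _
      simp [hY, hg]
    rw [hsum]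
    have hk : (l.countP (fun x => decide (x ≤ t)) : ℝ) ≤ (m : ℝ) - 1 := by
      have : l.countP (fun x => decide (x ≤ t)) + 1 ≤ m := by omega
      have := (Nat.cast_le (α := ℝ)).2 this
      push_cast at this
      linarith
    have hmε : (m : ℝ) ≤ ε := by rw [hε, hs']; exact hm
    linarith
  -- finish
  calc P {ω | t < Sm ω} ≤ P {ω | (∑ i : Fin n, Y i) ω ≤ ε} := measure_mono hsub
    _ = ENNReal.ofReal ((P {ω | (∑ i : Fin n, Y i) ω ≤ ε}).toReal) :=
        (ENNReal.ofReal_toReal (measure_ne_top _ _)).symm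
    _ ≤ ENNReal.ofReal ((n : ℝ) ^ (-(2 * c ^ 2))) := ENNReal.ofReal_le_ofReal hreal
end

section
/- (Order-statistic concentration, lower deviation.) Let n ≥ 1, let S_1, …, S_n be i.i.d. real-valued random variables, let t ∈ ℝ, set p = P[S_1 ≤ t], let c > 0, and let m ∈ {1, …, n} satisfy m ≥ np + c√(n log n). Let S_{(m)} denote the m-th smallest value among S_1, …, S_n. Then P[S_{(m)} ≤ t] ≤ n^{−2c²}. -/
open MeasureTheory ProbabilityTheory

/-- Hoeffding's lemma for Bernoulli variables. -/

lemma bernoulli_hoeffding {p : ℝ} (hp0 : 0 ≤ p) (hp1 : p ≤ 1) {x : ℝ} (hx : 0 ≤ x) :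
    1 - p + p * Real.exp x ≤ Real.exp (p * x + x ^ 2 / 8) := by
  set D : ℝ → ℝ := fun y => 1 - p + p * Real.exp y with hDdef
  have hD : ∀ y, 0 < D y := by
    intro y
    rcases eq_or_lt_of_le hp0 with h | h
    · simp [hDdef, ← h]
    · rcases eq_or_lt_of_le hp1 with h1 | h1
      · simp only [hDdef, h1]
        positivity
      · have : 0 < 1 - p := by linarith
        have : 0 < p * Real.exp y := by positivity
        simp only [hDdef]; linarith
  set q : ℝ → ℝ := fun y => p * Real.exp y / D y with hqdef
  have hasDerivD : ∀ y, HasDerivAt D (p * Real.exp y) y := by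
    intro y
    exact ((Real.hasDerivAt_exp y).const_mul p).const_add (1 - p)
  have hasDerivq : ∀ y, HasDerivAt q (q y - q y ^ 2) y := by
    intro y
    have h := ((Real.hasDerivAt_exp y).const_mul p).div (hasDerivD y) (hD y).ne'
    refine h.congr_deriv ?_
    have := (hD y).ne'
    simp only [hqdef]
    field_simp
  set g' : ℝ → ℝ := fun y => p + y / 4 - q y with hg'def
  set g : ℝ → ℝ := fun y => p * y + y ^ 2 / 8 - Real.log (D y) with hgdef
  have hasDerivg' : ∀ y, HasDerivAt g' (1 / 4 - (q y - q y ^ 2)) y := by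
    intro y
    have h1 : HasDerivAt (fun y : ℝ => p + y / 4) (1 / 4) y := by
      simpa using ((hasDerivAt_id y).div_const 4).const_add p
    exact h1.sub (hasDerivq y)
  have hasDerivg : ∀ y, HasDerivAt g (g' y) y := by
    intro y
    have h1 : HasDerivAt (fun y : ℝ => p * y + y ^ 2 / 8) (p + y / 4) y := by
      have := ((hasDerivAt_pow 2 y).div_const 8).const_add 0
      have h2 : HasDerivAt (fun y : ℝ => p * y) p y := by
        simpa using (hasDerivAt_id y).const_mul p
      have h3 : HasDerivAt (fun y : ℝ => y ^ 2 / 8) (y / 4) y := by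
        have := (hasDerivAt_pow 2 y).div_const 8
        exact this.congr_deriv (by norm_num; ring)
      exact h2.add h3
    have h2 : HasDerivAt (fun y => Real.log (D y)) (p * Real.exp y / D y) y :=
      (hasDerivD y).log (hD y).ne'
    exact h1.sub h2
  have hg'mono : Monotone g' := by
    apply monotone_of_deriv_nonneg
    · exact fun y => (hasDerivg' y).differentiableAt
    · intro y
      rw [(hasDerivg' y).deriv]
      nlinarith [sq_nonneg (q y - 1 / 2)]
  have hg'0 : g' 0 = 0 := by
    simp [hg'def, hqdef, hDdef]
  have hg'nonneg : ∀ y ∈ Set.Ici (0:ℝ), 0 ≤ g' y := by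
    intro y hy
    rw [← hg'0]
    exact hg'mono hy
  have hgmono : MonotoneOn g (Set.Ici 0) := by
    apply monotoneOn_of_deriv_nonneg (convex_Ici 0)
    · exact Differentiable.continuous (fun y => (hasDerivg y).differentiableAt) |>.continuousOn
    · intro y hy
      exact ((hasDerivg y).differentiableAt).differentiableWithinAt
    · intro y hy
      rw [(hasDerivg y).deriv]
      exact hg'nonneg y (interior_subset hy)
  have hg0 : g 0 = 0 := by simp [hgdef, hDdef]
  have hgx : 0 ≤ g x := by
    rw [← hg0]
    exact hgmono (Set.self_mem_Ici) hx hx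
  have hlog : Real.log (D x) ≤ p * x + x ^ 2 / 8 := by
    simp only [hgdef] at hgx; linarith
  calc D x = Real.exp (Real.log (D x)) := (Real.exp_log (hD x)).symm
    _ ≤ Real.exp (p * x + x ^ 2 / 8) := Real.exp_le_exp.mpr hlog

lemma countP_cast (l : List ℝ) (t : ℝ) :
    ((l.countP (fun x => decide (x ≤ t)) : ℕ) : ℝ)
      = (l.map (fun x => if x ≤ t then (1:ℝ) else 0)).sum := by
  induction l with
  | nil => simp
  | cons a l ih =>
    by_cases h : a ≤ t <;> simp [List.countP_cons, h, ih] <;> ring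

lemma orderStat_le_count {l : List ℝ} {m : ℕ} (hm1 : 1 ≤ m) (hmn : m ≤ l.length) {t : ℝ}
    (h : orderStat m l ≤ t) : m ≤ l.countP (fun x => decide (x ≤ t)) := by
  set s := l.insertionSort (· ≤ ·) with hs
  have hlen : s.length = l.length := List.length_insertionSort _ _
  have hsort : s.Pairwise (· ≤ ·) := List.pairwise_insertionSort _ _
  have hml : m - 1 < s.length := by omega
  have hord : orderStat m l = s[m-1] := by
    rw [orderStat, List.getD_eq_getElem _ _ hml]
  have hmono : ∀ i : ℕ, (hi : i < m) → s[i]'(by omega) ≤ t := by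
    intro i hi
    have : s[i]'(by omega) ≤ s[m-1] := by
      rcases lt_or_eq_of_le (Nat.le_sub_one_of_lt hi) with h' | h'
      · exact (List.pairwise_iff_getElem.mp hsort) i (m-1) (by omega) hml h'
      · subst h'; exact le_rfl
    exact this.trans (hord ▸ h)
  rw [← (List.perm_insertionSort (· ≤ ·) l).countP_eq]
  have hsplit : s = s.take m ++ s.drop m := (List.take_append_drop m s).symm
  have htlen : (s.take m).length = m := by
    rw [List.length_take]; omega
  have htake : (s.take m).countP (fun x => decide (x ≤ t)) = m := by
    rw [List.countP_eq_length.mpr, htlen]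
    intro a ha
    obtain ⟨i, hi, rfl⟩ := List.mem_iff_getElem.mp ha
    rw [List.getElem_take]
    simp only [decide_eq_true_eq]
    exact hmono i (by omega)
  calc m = (s.take m).countP (fun x => decide (x ≤ t)) := htake.symm
    _ ≤ s.countP (fun x => decide (x ≤ t)) := by
        conv_rhs => rw [hsplit]
        rw [List.countP_append]; omega

/-- (Order-statistic concentration, lower deviation.) Let `n ≥ 1`, let `S_1, …, S_n` be
i.i.d. real-valued random variables, `t ∈ ℝ`, `p = P[S_1 ≤ t]`, `c > 0`, and let
`m ∈ {1,…,n}` satisfy `m ≥ np + c√(n log n)`. Let `S_(m)` be the `m`-th smallest value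
among `S_1, …, S_n`. Then `P[S_(m) ≤ t] ≤ n^{-2c²}`. -/
theorem order_statistic_lower_deviation
    {Ω : Type*} [MeasurableSpace Ω] (P : Measure Ω) [IsProbabilityMeasure P]
    (n : ℕ) (hn : 1 ≤ n)
    (S : Fin n → Ω → ℝ)
    (hSmeas : ∀ i, Measurable (S i))
    (hSindep : iIndepFun S P)
    (hSident : ∀ i j, P.map (S i) = P.map (S j))
    (t : ℝ)
    (p : ℝ) (hp : p = (P {ω | S ⟨0, hn⟩ ω ≤ t}).toReal)
    (c : ℝ) (hc : 0 < c)
    (m : ℕ) (hm1 : 1 ≤ m) (hmn : m ≤ n)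
    (hm : (n : ℝ) * p + c * Real.sqrt (n * Real.log n) ≤ (m : ℝ))
    (Sm : Ω → ℝ)
    (hSm : ∀ ω, Sm ω = orderStat m (List.ofFn fun i : Fin n => S i ω)) :
    P {ω | Sm ω ≤ t} ≤ ENNReal.ofReal ((n : ℝ) ^ (-(2 * c ^ 2))) := by
  classical
  have hnpos : (0:ℝ) < n := by exact_mod_cast hn
  -- the indicator random variables
  set g : ℝ → ℝ := fun y => if y ≤ t then 1 else 0 with hgdef
  have hgmeas : Measurable g := by
    apply Measurable.ite _ measurable_const measurable_const
    exact measurableSet_Iic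
  set X : Fin n → Ω → ℝ := fun i => g ∘ S i with hXdef
  have hXmeas : ∀ i, Measurable (X i) := fun i => hgmeas.comp (hSmeas i)
  have hXindep : iIndepFun X P :=
    hSindep.comp (fun _ => g) (fun _ => hgmeas)
  -- identical probabilities
  have hA : ∀ i, MeasurableSet {ω | S i ω ≤ t} := fun i =>
    (hSmeas i) measurableSet_Iic
  have hPA : ∀ i, (P {ω | S i ω ≤ t}).toReal = p := by
    intro i
    rw [hp]
    have h1 : ∀ j : Fin n, P {ω | S j ω ≤ t} = P.map (S j) (Set.Iic t) := by
      intro j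
      rw [Measure.map_apply (hSmeas j) measurableSet_Iic]
      rfl
    rw [h1, h1, hSident i ⟨0, hn⟩]
  have hp0 : 0 ≤ p := hp ▸ ENNReal.toReal_nonneg
  have hp1 : p ≤ 1 := by
    rw [hp]
    exact ENNReal.toReal_le_of_le_ofReal zero_le_one (by simpa using prob_le_one)
  -- parameters
  set sv : ℝ := (m : ℝ) - n * p with hsvdef
  have hlogn : 0 ≤ Real.log n := Real.log_nonneg (by exact_mod_cast hn)
  have hnln : 0 ≤ (n : ℝ) * Real.log n := by positivity
  have hsv : c * Real.sqrt (n * Real.log n) ≤ sv := by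
    rw [hsvdef]; linarith
  have hsv0 : 0 ≤ sv := le_trans (by positivity) hsv
  set lam : ℝ := 4 * sv / n with hlamdef
  have hlam0 : 0 ≤ lam := by positivity
  -- integrability & mgf of each X i
  have hXeq : ∀ i, (fun ω => Real.exp (lam * X i ω))
      = fun ω => Set.indicator {ω | S i ω ≤ t} (fun _ => Real.exp lam - 1) ω + 1 := by
    intro i
    funext ω
    by_cases h : S i ω ≤ t
    · simp [hXdef, hgdef, h, Set.indicator_of_mem (h : ω ∈ {ω | S i ω ≤ t})]
    · simp [hXdef, hgdef, h, Set.indicator_of_notMem (h : ω ∉ {ω | S i ω ≤ t})]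
  have hXint : ∀ i, Integrable (fun ω => Real.exp (lam * X i ω)) P := by
    intro i
    rw [hXeq i]
    exact ((integrable_const (Real.exp lam - 1)).indicator (hA i)).add (integrable_const 1)
  have hmgf : ∀ i, mgf (X i) P lam = 1 - p + p * Real.exp lam := by
    intro i
    rw [mgf, hXeq i]
    rw [integral_add ((integrable_const (Real.exp lam - 1)).indicator (hA i)) (integrable_const 1)]
    rw [integral_indicator_const _ (hA i), integral_const]
    simp [hPA i, measure_univ]
    rw [measureReal_def, hPA i]
    ring
  -- sum and Chernoff
  set Y : Ω → ℝ := ∑ i, X i with hYdef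
  have hYint : Integrable (fun ω => Real.exp (lam * Y ω)) P :=
    hXindep.integrable_exp_mul_sum hXmeas (fun i _ => hXint i)
  have chernoff : (P {ω | (m:ℝ) ≤ Y ω}).toReal
      ≤ Real.exp (-lam * m) * mgf Y P lam :=
    measure_ge_le_exp_mul_mgf (m:ℝ) hlam0 hYint
  have hmgfY : mgf Y P lam = (1 - p + p * Real.exp lam) ^ n := by
    rw [hYdef, hXindep.mgf_sum hXmeas]
    rw [Finset.prod_congr rfl (fun i _ => hmgf i), Finset.prod_const, Finset.card_univ,
      Fintype.card_fin]
  -- event inclusion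
  have hsubset : {ω | Sm ω ≤ t} ⊆ {ω | (m:ℝ) ≤ Y ω} := by
    intro ω hω
    simp only [Set.mem_setOf_eq] at hω ⊢
    have hcount : m ≤ (List.ofFn fun i : Fin n => S i ω).countP (fun x => decide (x ≤ t)) := by
      apply orderStat_le_count hm1
      · rw [List.length_ofFn]; exact hmn
      · rw [← hSm]; exact hω
    have hYval : Y ω = ((List.ofFn fun i : Fin n => S i ω).countP (fun x => decide (x ≤ t)) : ℝ) := by
      rw [countP_cast, List.map_ofFn, hYdef, Finset.sum_apply, ← List.sum_ofFn]
      rfl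
    rw [hYval]
    exact_mod_cast hcount
  -- arithmetic bound
  have hbern : (1 - p + p * Real.exp lam) ^ n ≤ Real.exp (p * lam + lam ^ 2 / 8) ^ n := by
    apply pow_le_pow_left₀ _ (bernoulli_hoeffding hp0 hp1 hlam0)
    have := Real.exp_pos lam
    nlinarith
  have hfinal : Real.exp (-lam * m) * Real.exp (p * lam + lam ^ 2 / 8) ^ n
      = Real.exp (-2 * sv ^ 2 / n) := by
    rw [← Real.exp_nat_mul, ← Real.exp_add]
    congr 1
    rw [hlamdef, hsvdef]
    field_simp
    ring
  have hexple : Real.exp (-2 * sv ^ 2 / n) ≤ (n : ℝ) ^ (-(2 * c ^ 2)) := by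
    rw [Real.rpow_def_of_pos hnpos]
    apply Real.exp_le_exp.mpr
    have hsq : c ^ 2 * ((n:ℝ) * Real.log n) ≤ sv ^ 2 := by
      have h1 : (c * Real.sqrt (n * Real.log n)) ^ 2 ≤ sv ^ 2 := by
        apply pow_le_pow_left₀ (by positivity) hsv
      rw [mul_pow, Real.sq_sqrt hnln] at h1
      exact h1
    rw [div_le_iff₀ hnpos]
    nlinarith [hsq]
  -- put everything together
  calc P {ω | Sm ω ≤ t} ≤ P {ω | (m:ℝ) ≤ Y ω} := measure_mono hsubset
    _ = ENNReal.ofReal ((P {ω | (m:ℝ) ≤ Y ω}).toReal) :=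
        (ENNReal.ofReal_toReal (measure_ne_top P _)).symm
    _ ≤ ENNReal.ofReal ((n : ℝ) ^ (-(2 * c ^ 2))) := by
        apply ENNReal.ofReal_le_ofReal
        calc (P {ω | (m:ℝ) ≤ Y ω}).toReal
            ≤ Real.exp (-lam * m) * mgf Y P lam := chernoff
          _ ≤ Real.exp (-lam * m) * Real.exp (p * lam + lam ^ 2 / 8) ^ n := by
              rw [hmgfY]
              exact mul_le_mul_of_nonneg_left hbern (Real.exp_pos _).le
          _ = Real.exp (-2 * sv ^ 2 / n) := hfinal
          _ ≤ (n : ℝ) ^ (-(2 * c ^ 2)) := hexple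
end
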